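/- arXiv:2006.09126 — 4 statements merged into one kernel-verified Lean document; each statement's English description precedes it below -/
import Mathlib

section
/- Let n ≥ 1 and let x ∈ {0,1}^n be a fixed search point with z := |x|₀ ≥ 1 zero-bits and o := |x|₁ ≥ 1 one-bits. Let r₀, r₁ ≥ 0 with r₀ + r₁ = 1 and let 0 ≤ β ≤ r₁. Then for the fitness function OneMax, P[S_{((r₀+β)/z, (r₁−β)/o)}] ≥ P[S_{(r₀/z, r₁/o)}] + r₁·r₀·(1 − e^{−β}). -/
open MeasureTheory

/-- The (possibly sub-)probability measure on `Bool` putting mass `p` on `true`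
and mass `1 - p` on `false` (a Bernoulli distribution for `p ∈ [0,1]`). -/
noncomputable def bern (p : ℝ) : Measure Bool :=
  ENNReal.ofReal p • Measure.dirac true + ENNReal.ofReal (1 - p) • Measure.dirac false

/-- Asymmetric mutation: from `x`, flip each zero-bit independently with probability `p₀`
and each one-bit independently with probability `p₁`; this is the distribution of the
offspring `y`. -/
noncomputable def mutation {n : ℕ} (x : Fin n → Bool) (p₀ p₁ : ℝ) :
    Measure (Fin n → Bool) :=
  (Measure.pi fun i => bern (if x i then p₁ else p₀)).map fun flip i => xor (flip i) (x i)

/-- The number of one-bits of `x`; `OneMax(x) = ones x`. -/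
def ones {n : ℕ} (x : Fin n → Bool) : ℕ := (Finset.univ.filter fun i => x i = true).card

/-- The number of zero-bits of `x`. -/
def zeros {n : ℕ} (x : Fin n → Bool) : ℕ := (Finset.univ.filter fun i => x i = false).card

/-- `P[S_{(p₀,p₁)}]`: probability that asymmetric mutation with pair `(p₀,p₁)` produces a
strict improvement of OneMax from `x`. -/
noncomputable def improveProb {n : ℕ} (x : Fin n → Bool) (p₀ p₁ : ℝ) : ℝ :=
  ((mutation x p₀ p₁) {y | ones x < ones y}).toReal

namespace AsymProof

def cnt {m : ℕ} (g : Fin m → Bool) : ℕ := ∑ i, if g i then 1 else 0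
def wt (p : ℝ) {m : ℕ} (g : Fin m → Bool) : ℝ := ∏ i, if g i then p else 1 - p
def Ex (m : ℕ) (p : ℝ) (φ : ℕ → ℝ) : ℝ := ∑ g : Fin m → Bool, wt p g * φ (cnt g)

lemma cnt_cons {m : ℕ} (b : Bool) (g : Fin m → Bool) :
    cnt (Fin.cons b g) = (if b then 1 else 0) + cnt g := by
  simp only [cnt, Fin.sum_univ_succ, Fin.cons_zero, Fin.cons_succ]

lemma wt_cons (p : ℝ) {m : ℕ} (b : Bool) (g : Fin m → Bool) :
    wt p (Fin.cons b g) = (if b then p else 1 - p) * wt p g := by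
  simp only [wt, Fin.prod_univ_succ, Fin.cons_zero, Fin.cons_succ]

lemma sum_funsucc {m : ℕ} (F : (Fin (m+1) → Bool) → ℝ) :
    ∑ g : Fin (m+1) → Bool, F g = ∑ x : Bool × (Fin m → Bool), F (Fin.cons x.1 x.2) := by
  rw [← (Fin.consEquiv (fun _ : Fin (m+1) => Bool)).sum_comp F]; rfl

lemma Ex_zero (p : ℝ) (φ : ℕ → ℝ) : Ex 0 p φ = φ 0 := by
  simp [Ex, wt, cnt]

lemma Ex_succ (m : ℕ) (p : ℝ) (φ : ℕ → ℝ) :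
    Ex (m + 1) p φ = (1 - p) * Ex m p φ + p * Ex m p (fun k => φ (k + 1)) := by
  rw [Ex, sum_funsucc (fun g => wt p g * φ (cnt g))]
  rw [Fintype.sum_prod_type, Fintype.sum_bool]
  simp only [wt_cons, cnt_cons]
  norm_num
  rw [Ex, Ex, Finset.mul_sum, Finset.mul_sum, add_comm]
  congr 1
  · exact Finset.sum_congr rfl fun g _ => by ring
  · exact Finset.sum_congr rfl fun g _ => by rw [add_comm 1 (cnt g)]; ring

lemma wt_nonneg {p : ℝ} (h0 : 0 ≤ p) (h1 : p ≤ 1) {m : ℕ} (g : Fin m → Bool) :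
    0 ≤ wt p g :=
  Finset.prod_nonneg fun i _ => by split <;> linarith

lemma Ex_mono_phi {m : ℕ} {p : ℝ} (h0 : 0 ≤ p) (h1 : p ≤ 1) {φ ψ : ℕ → ℝ}
    (h : ∀ k, φ k ≤ ψ k) : Ex m p φ ≤ Ex m p ψ :=
  Finset.sum_le_sum fun g _ => mul_le_mul_of_nonneg_left (h _) (wt_nonneg h0 h1 g)

lemma Ex_nonneg {m : ℕ} {p : ℝ} (h0 : 0 ≤ p) (h1 : p ≤ 1) {φ : ℕ → ℝ}
    (h : ∀ k, 0 ≤ φ k) : 0 ≤ Ex m p φ :=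
  Finset.sum_nonneg fun g _ => mul_nonneg (wt_nonneg h0 h1 g) (h _)

lemma Ex_const (m : ℕ) (p : ℝ) (C : ℝ) : Ex m p (fun _ => C) = C := by
  induction m with
  | zero => simp [Ex_zero]
  | succ m ih => rw [Ex_succ, ih]; ring

lemma Ex_sub (m : ℕ) (p : ℝ) (φ ψ : ℕ → ℝ) :
    Ex m p (fun k => φ k - ψ k) = Ex m p φ - Ex m p ψ := by
  simp [Ex, mul_sub, Finset.sum_sub_distrib]

lemma Ex_mono_p {p q : ℝ} (h0 : 0 ≤ p) (hpq : p ≤ q) (h1 : q ≤ 1)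
    {φ : ℕ → ℝ} (hφ : Monotone φ) : ∀ m, Ex m p φ ≤ Ex m q φ := by
  intro m
  induction m generalizing φ with
  | zero => simp [Ex_zero]
  | succ m ih =>
    rw [Ex_succ, Ex_succ]
    have h1' : ∀ k, φ k ≤ φ (k + 1) := fun k => hφ (Nat.le_succ k)
    have e1 : Ex m p φ ≤ Ex m q φ := ih hφ
    have e2 : Ex m p (fun k => φ (k+1)) ≤ Ex m q (fun k => φ (k+1)) :=
      ih (fun a b hab => hφ (by omega))
    have e3 : Ex m q φ ≤ Ex m q (fun k => φ (k+1)) :=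
      Ex_mono_phi (le_trans h0 hpq) h1 h1'
    nlinarith [Ex_mono_phi (m := m) h0 (le_trans hpq h1) h1']

lemma Ex_anti_p {p q : ℝ} (h0 : 0 ≤ p) (hpq : p ≤ q) (h1 : q ≤ 1)
    {φ : ℕ → ℝ} (hφ : Antitone φ) (m : ℕ) : Ex m q φ ≤ Ex m p φ := by
  have key := Ex_mono_p h0 hpq h1 (φ := fun k => φ 0 - φ k)
    (fun a b hab => by have := hφ (Nat.zero_le a); have := hφ hab; simp; linarith) m
  rw [Ex_sub, Ex_sub] at key
  simp only [Ex_const] at key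
  linarith

/-- tail probability beyond k -/
lemma Ex_tail_zero (m : ℕ) (p : ℝ) :
    Ex m p (fun a => if 0 < a then 1 else 0) = 1 - (1 - p) ^ m := by
  induction m with
  | zero => simp [Ex_zero]
  | succ m ih =>
    rw [Ex_succ, ih]
    have : Ex m p (fun k => if 0 < k + 1 then (1:ℝ) else 0) = Ex m p (fun _ => 1) := by
      congr 1
    rw [this, Ex_const]; ring

lemma wt_false (p : ℝ) (m : ℕ) : wt p (fun _ : Fin m => false) = (1 - p) ^ m := by
  simp [wt]

lemma cnt_false (m : ℕ) : cnt (fun _ : Fin m => false) = 0 := by simp [cnt]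

lemma Ex_single_le {m : ℕ} {p : ℝ} (h0 : 0 ≤ p) (h1 : p ≤ 1) {φ : ℕ → ℝ}
    (h : ∀ k, 0 ≤ φ k) : (1 - p) ^ m * φ 0 ≤ Ex m p φ := by
  have := Finset.single_le_sum (f := fun g : Fin m → Bool => wt p g * φ (cnt g))
    (fun g _ => mul_nonneg (wt_nonneg h0 h1 g) (h _))
    (Finset.mem_univ (fun _ : Fin m => false))
  simpa [Ex, wt_false, cnt_false] using this


lemma bern_singleton (p : ℝ) (b : Bool) :
    bern p {b} = ENNReal.ofReal (if b then p else 1 - p) := by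
  cases b <;> simp [bern]

instance (p : ℝ) : IsFiniteMeasure (bern p) := by
  constructor
  simp [bern]

open scoped Classical in
lemma measure_eq_sum {α : Type*} [Fintype α] [MeasurableSpace α]
    [MeasurableSingletonClass α] (μ : Measure α) (S : Set α) :
    μ S = ∑ f : α, if f ∈ S then μ {f} else 0 := by
  have h : S = ⋃ f ∈ Finset.univ.filter (· ∈ S), ({f} : Set α) := by ext; simp
  have hd : (↑(Finset.univ.filter (· ∈ S)) : Set α).PairwiseDisjoint
      (fun f => ({f} : Set α)) := fun a _ b _ hab => by
    simp only [Set.disjoint_singleton]; exact hab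
  conv_lhs => rw [h]
  rw [measure_biUnion_finset hd (fun b _ => measurableSet_singleton b), Finset.sum_filter]

lemma pi_singleton {n : ℕ} (x : Fin n → Bool) (p₀ p₁ : ℝ) (f : Fin n → Bool) :
    (Measure.pi fun i => bern (if x i then p₁ else p₀)) {f}
      = ∏ i, bern (if x i then p₁ else p₀) {f i} := by
  rw [← Set.univ_pi_singleton f, Measure.pi_pi]

open scoped Classical in
lemma improveProb_eq {n : ℕ} (x : Fin n → Bool) (p₀ p₁ : ℝ)
    (h00 : 0 ≤ p₀) (h01 : p₀ ≤ 1) (h10 : 0 ≤ p₁) (h11 : p₁ ≤ 1) :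
    improveProb x p₀ p₁ = ∑ f : Fin n → Bool,
      (if ones x < ones (fun i => xor (f i) (x i)) then 1 else 0)
        * ∏ i, (if f i then (if x i then p₁ else p₀) else 1 - (if x i then p₁ else p₀)) := by
  have hw : ∀ f : Fin n → Bool, ∀ i, (0:ℝ) ≤
      (if f i then (if x i then p₁ else p₀) else 1 - (if x i then p₁ else p₀)) := by
    intro f i; split <;> split <;> linarith
  have hmeas : Measurable (fun (flip : Fin n → Bool) i => xor (flip i) (x i)) :=
    measurable_of_countable _
  rw [improveProb, mutation, Measure.map_apply hmeas
    ((Set.to_countable _).measurableSet)]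
  rw [measure_eq_sum]
  simp only [Set.mem_preimage, Set.mem_setOf_eq]
  rw [ENNReal.toReal_sum]
  · apply Finset.sum_congr rfl
    intro f _
    rw [pi_singleton]
    have hb : ∀ i, bern (if x i then p₁ else p₀) {f i}
        = ENNReal.ofReal (if f i then (if x i then p₁ else p₀) else 1 - (if x i then p₁ else p₀)) := by
      intro i; rw [bern_singleton]
    by_cases hmem : ones x < ones (fun i => xor (f i) (x i))
    · rw [if_pos hmem, if_pos hmem]
      simp only [hb]
      rw [← ENNReal.ofReal_prod_of_nonneg (fun i _ => hw f i)]
      rw [ENNReal.toReal_ofReal (Finset.prod_nonneg fun i _ => hw f i)]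
      rw [one_mul]
    · rw [if_neg hmem, if_neg hmem]
      simp
  · intro f _
    split
    · rw [pi_singleton]
      refine (lt_of_le_of_lt ?_ ENNReal.one_lt_top).ne
      calc ∏ i, bern (if x i then p₁ else p₀) {f i}
          ≤ ∏ (_ : Fin n), 1 := by
            apply Finset.prod_le_prod (fun _ _ => zero_le)
            intro i _
            rw [bern_singleton]
            apply ENNReal.ofReal_le_one.2
            split <;> split <;> linarith
        _ = 1 := by simp
    · exact ENNReal.zero_ne_top


lemma Ex_eq_sum {ι : Type*} [Fintype ι] [DecidableEq ι] {m : ℕ} (h : Fintype.card ι = m) (p : ℝ) (φ : ℕ → ℝ) :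
    ∑ g : ι → Bool, (∏ i, if g i then p else 1 - p) * φ (∑ i, if g i then 1 else 0)
      = Ex m p φ := by
  classical
  let e : ι ≃ Fin m := Fintype.equivFinOfCardEq h
  rw [Ex]
  refine Fintype.sum_equiv (Equiv.arrowCongr e (Equiv.refl Bool)) _ _ ?_
  intro g
  congr 1
  · rw [wt]
    exact Fintype.prod_equiv e _ _ (fun i => by simp)
  · rw [cnt]
    congr 1
    exact Fintype.sum_equiv e _ _ (fun i => by simp)

section Split
variable {n : ℕ} (x : Fin n → Bool) (p₀ p₁ : ℝ)

open scoped Classical in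
/-- main structural identity -/
lemma sum_eq_ExEx :
    (∑ f : Fin n → Bool,
      (if ones x < ones (fun i => xor (f i) (x i)) then (1:ℝ) else 0)
        * ∏ i, (if f i then (if x i then p₁ else p₀) else 1 - (if x i then p₁ else p₀)))
    = Ex (ones x) p₁ (fun b => Ex (zeros x) p₀ (fun a => if b < a then 1 else 0)) := by
  classical
  set P : Fin n → Prop := fun i => x i = true with hP
  set e := Equiv.piEquivPiSubtypeProd P (fun _ => Bool) with he
  set T : (Fin n → Bool) → ℝ := fun f =>
      (if ones x < ones (fun i => xor (f i) (x i)) then (1:ℝ) else 0)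
        * ∏ i, (if f i then (if x i then p₁ else p₀) else 1 - (if x i then p₁ else p₀)) with hT
  rw [show (∑ f : Fin n → Bool, T f) = ∑ y : (∀ _ : {i // P i}, Bool) × (∀ _ : {i // ¬ P i}, Bool),
      T (e.symm y) from (Equiv.sum_comp e.symm T).symm]
  rw [Fintype.sum_prod_type]
  have hcardO : Fintype.card {i // P i} = ones x := by
    rw [Fintype.card_subtype]; rfl
  have hcardZ : Fintype.card {i // ¬ P i} = zeros x := by
    rw [Fintype.card_subtype]
    unfold zeros
    congr 1
    apply Finset.filter_congr
    intro i _
    simp [hP]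
  have hval : ∀ (y : (∀ _ : {i // P i}, Bool) × (∀ _ : {i // ¬ P i}, Bool)) (i : Fin n),
      e.symm y i = if hi : P i then y.1 ⟨i, hi⟩ else y.2 ⟨i, hi⟩ := by
    intro y i
    rw [he]
    rw [Equiv.piEquivPiSubtypeProd_symm_apply]
  -- pointwise rewrite of T
  have hTval : ∀ (h : ∀ _ : {i // P i}, Bool) (g : ∀ _ : {i // ¬ P i}, Bool),
      T (e.symm (h, g)) =
        ((∏ i, if h i then p₁ else 1 - p₁) *
          ((if (∑ i, if h i then 1 else 0) < (∑ i : {i // ¬ P i}, if g i then 1 else 0) then (1:ℝ) else 0)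
            * ∏ i : {i // ¬ P i}, if g i then p₀ else 1 - p₀)) := by
    intro h g
    have hfO : ∀ i : {i // P i}, e.symm (h, g) i.1 = h i := by
      intro i; rw [hval]; exact dif_pos i.2
    have hfZ : ∀ i : {i // ¬ P i}, e.symm (h, g) i.1 = g i := by
      intro i; rw [hval]; exact dif_neg i.2
    have hxO : ∀ i : {i // P i}, x i.1 = true := fun i => i.2
    have hxZ : ∀ i : {i // ¬ P i}, x i.1 = false := fun i => by
      have := i.2; simp [hP] at this; exact this
    rw [hT]
    dsimp only
    -- product part
    have hprod : (∏ i, (if e.symm (h, g) i then (if x i then p₁ else p₀)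
          else 1 - (if x i then p₁ else p₀)))
        = (∏ i, if h i then p₁ else 1 - p₁) * ∏ i : {i // ¬ P i}, if g i then p₀ else 1 - p₀ := by
      rw [← Fintype.prod_subtype_mul_prod_subtype P (fun i => (if e.symm (h, g) i then (if x i then p₁ else p₀) else 1 - (if x i then p₁ else p₀)))]
      congr 1
      · exact Finset.prod_congr rfl fun i _ => by rw [hfO i, hxO i]; simp
      · exact Finset.prod_congr rfl fun i _ => by rw [hfZ i, hxZ i]; simp
    -- counting part
    have hones : (ones x < ones (fun i => xor (e.symm (h, g) i) (x i)))
        ↔ ((∑ i, if h i then 1 else 0) < (∑ i : {i // ¬ P i}, if g i then 1 else 0)) := by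
      have hcard : ∀ y : Fin n → Bool, ones y = ∑ i, if y i then 1 else 0 := by
        intro y; rw [ones, Finset.card_filter]
      have hsplit : ∀ F : Fin n → ℕ,
          (∑ i, F i) = (∑ i : {i // P i}, F i) + ∑ i : {i // ¬ P i}, F i :=
        fun F => (Fintype.sum_subtype_add_sum_subtype P F).symm
      rw [hcard, hcard, hsplit (fun i => if x i then 1 else 0),
        hsplit (fun i => if xor (e.symm (h, g) i) (x i) then 1 else 0)]
      have e1 : (∑ i : {i // P i}, if x i.1 then 1 else 0) = ∑ i : {i // P i}, 1 :=
        Finset.sum_congr rfl fun i _ => by rw [hxO i]; simp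
      have e2 : (∑ i : {i // ¬ P i}, if x i.1 then 1 else 0) = 0 :=
        Finset.sum_eq_zero fun i _ => by rw [hxZ i]; simp
      have e3 : (∑ i : {i // P i}, if xor (e.symm (h, g) i.1) (x i.1) then 1 else 0)
          = ∑ i : {i // P i}, if h i then 0 else 1 :=
        Finset.sum_congr rfl fun i _ => by
          rw [hfO i, hxO i]; cases h i <;> simp
      have e4 : (∑ i : {i // ¬ P i}, if xor (e.symm (h, g) i.1) (x i.1) then 1 else 0)
          = ∑ i : {i // ¬ P i}, if g i then 1 else 0 :=
        Finset.sum_congr rfl fun i _ => by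
          rw [hfZ i, hxZ i]; cases g i <;> simp
      rw [e1, e2, e3, e4]
      have e5 : (∑ i : {i // P i}, if h i then 1 else 0) + (∑ i : {i // P i}, if h i then 0 else 1)
          = ∑ i : {i // P i}, 1 := by
        rw [← Finset.sum_add_distrib]
        exact Finset.sum_congr rfl fun i _ => by cases h i <;> simp
      omega
    rw [hprod]
    by_cases hc : ones x < ones (fun i => xor (e.symm (h, g) i) (x i))
    · rw [if_pos hc, if_pos (hones.1 hc)]; ring
    · rw [if_neg hc, if_neg (fun hcc => hc (hones.2 hcc))]; ring
  calc (∑ h : ∀ _ : {i // P i}, Bool, ∑ g : ∀ _ : {i // ¬ P i}, Bool, T (e.symm (h, g)))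
      = ∑ h : ∀ _ : {i // P i}, Bool, (∏ i, if h i then p₁ else 1 - p₁) *
          ∑ g : ∀ _ : {i // ¬ P i}, Bool,
            (∏ i : {i // ¬ P i}, if g i then p₀ else 1 - p₀) *
              (if (∑ i, if h i then 1 else 0) < (∑ i : {i // ¬ P i}, if g i then 1 else 0) then (1:ℝ) else 0) := by
        refine Finset.sum_congr rfl fun h _ => ?_
        rw [Finset.mul_sum]
        refine Finset.sum_congr rfl fun g _ => ?_
        rw [hTval h g]
        ring
    _ = ∑ h : ∀ _ : {i // P i}, Bool, (∏ i, if h i then p₁ else 1 - p₁) *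
          Ex (zeros x) p₀ (fun a => if (∑ i, if h i then 1 else 0) < a then 1 else 0) := by
        refine Finset.sum_congr rfl fun h _ => ?_
        congr 1
        rw [← Ex_eq_sum hcardZ p₀ (fun a => if (∑ i, if h i then 1 else 0) < a then 1 else 0)]
    _ = Ex (ones x) p₁ (fun b => Ex (zeros x) p₀ (fun a => if b < a then 1 else 0)) := by
        rw [← Ex_eq_sum hcardO p₁ (fun b => Ex (zeros x) p₀ (fun a => if b < a then 1 else 0))]


/-- A1: mean value bound for powers -/
lemma pow_sub_pow_ge {a b : ℝ} (hb : 0 ≤ b) (hab : b ≤ a) (m : ℕ) :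
    (m : ℝ) * (a - b) * b ^ (m - 1) ≤ a ^ m - b ^ m := by
  have key : ∀ i ∈ Finset.range m, b ^ (m - 1) ≤ a ^ i * b ^ (m - 1 - i) := by
    intro i hi
    have hi' : i < m := Finset.mem_range.1 hi
    have : b ^ (m - 1) = b ^ i * b ^ (m - 1 - i) := by
      rw [← pow_add]; congr 1; omega
    rw [this]
    exact mul_le_mul_of_nonneg_right (pow_le_pow_left₀ hb hab i) (pow_nonneg hb _)
  have hsum : (m : ℝ) * b ^ (m - 1) ≤ ∑ i ∈ Finset.range m, a ^ i * b ^ (m - 1 - i) := by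
    calc (m : ℝ) * b ^ (m-1) = ∑ _i ∈ Finset.range m, b ^ (m-1) := by
          rw [Finset.sum_const, Finset.card_range, nsmul_eq_mul]
      _ ≤ _ := Finset.sum_le_sum key
  have hgeom := geom_sum₂_mul (R := ℝ) a b m
  have hab' : 0 ≤ a - b := by linarith
  calc (m:ℝ) * (a - b) * b ^ (m-1) = ((m:ℝ) * b ^ (m-1)) * (a - b) := by ring
    _ ≤ (∑ i ∈ Finset.range m, a ^ i * b ^ (m - 1 - i)) * (a - b) :=
        mul_le_mul_of_nonneg_right hsum hab'
    _ = a ^ m - b ^ m := hgeom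

/-- A2: (1 - c/z)^(z-1) ≥ exp (-c) for 1 ≤ z, 0 ≤ c ≤ 1 -/
lemma pow_ge_exp {z : ℕ} (hz : 1 ≤ z) {c : ℝ} (hc0 : 0 ≤ c) (hc1 : c ≤ 1) :
    Real.exp (-c) ≤ (1 - c / z) ^ (z - 1) := by
  rcases Nat.eq_or_lt_of_le hz with h1 | h2
  · rw [← h1]
    norm_num
    linarith
  · -- z ≥ 2
    have hz2 : (2:ℝ) ≤ (z:ℝ) := by exact_mod_cast h2
    have hw1 : (1:ℝ) ≤ (z:ℝ) - 1 := by linarith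
    have hwpos : (0:ℝ) < (z:ℝ) - 1 := by linarith
    have hzpos : (0:ℝ) < (z:ℝ) := by linarith
    set t : ℝ := c / ((z:ℝ) - 1) with ht
    have ht0 : 0 ≤ t := div_nonneg hc0 hwpos.le
    have hkey : Real.exp (-t) ≤ 1 - c / z := by
      have h1t : (0:ℝ) < 1 + t := by linarith
      have hexp : 1 + t ≤ Real.exp t := by
        have := Real.add_one_le_exp t; linarith
      have hinv : Real.exp (-t) ≤ 1 / (1 + t) := by
        rw [Real.exp_neg, ← one_div]
        exact one_div_le_one_div_of_le h1t hexp
      refine hinv.trans ?_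
      rw [div_le_iff₀ h1t]
      have expand : (1 - c / z) * (1 + t) - 1 = c * (1 - c) / ((z:ℝ) * ((z:ℝ) - 1)) := by
        rw [ht]
        field_simp [hwpos.ne']
        ring
      have hpos : 0 ≤ c * (1 - c) / ((z:ℝ) * ((z:ℝ) - 1)) :=
        div_nonneg (mul_nonneg hc0 (by linarith)) (by positivity)
      linarith [expand, hpos]
    calc Real.exp (-c) = Real.exp (-t) ^ (z - 1) := by
          rw [← Real.exp_nat_mul]
          congr 1
          have : ((z - 1 : ℕ) : ℝ) = (z:ℝ) - 1 := by
            have : (1:ℕ) ≤ z := hz; push_cast [this]; ring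
          rw [this, ht]
          field_simp
      _ ≤ (1 - c / z) ^ (z - 1) := pow_le_pow_left₀ (Real.exp_nonneg _) hkey _

/-- A3: Bernoulli -/
lemma pow_ge_linear {o : ℕ} (ho : 1 ≤ o) {t : ℝ} (ht0 : 0 ≤ t) (ht1 : t ≤ 1) :
    1 - t ≤ (1 - t / o) ^ o := by
  have hopos : (0:ℝ) < o := by
    have h0 : 0 < o := ho
    exact_mod_cast h0
  have h := one_add_mul_le_pow (a := -(t / o)) (by
    have : t / o ≤ 1 := by rw [div_le_one hopos]; exact le_trans ht1 (by exact_mod_cast ho)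
    linarith) o
  have e1 : 1 + (o:ℝ) * -(t / o) = 1 - t := by field_simp; ring
  have e2 : (1 : ℝ) + -(t/o) = 1 - t/o := by ring
  rw [e1, e2] at h
  exact h

/-- A4 -/
lemma key_exp_ineq {r₀ r₁ β : ℝ} (hr₀ : 0 ≤ r₀) (hr₁ : 0 ≤ r₁) (hsum : r₀ + r₁ = 1)
    (hβ₀ : 0 ≤ β) (hβ : β ≤ r₁) :
    r₀ * r₁ * (1 - Real.exp (-β)) ≤ β * (r₀ + β) * Real.exp (-(r₀ + β)) := by
  rcases eq_or_lt_of_le hr₀ with h0 | h0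
  · -- r₀ = 0
    have : r₀ = 0 := h0.symm
    rw [this]
    simp
    positivity
  · -- r₀ > 0 hence β ≤ r₁ = 1 - r₀ < 1
    have hβ1 : β < 1 := by linarith
    have h1β : (0:ℝ) < 1 - β := by linarith
    -- step 1 : 1 - exp(-β) ≤ β
    have s1 : 1 - Real.exp (-β) ≤ β := by
      have := Real.add_one_le_exp (-β); linarith
    -- step 2 : r₀ * exp (β) ≤ r₀ + β  (uses exp β ≤ 1/(1-β))
    have s2 : r₀ * Real.exp β ≤ r₀ + β := by
      have hexpb : Real.exp β ≤ 1 / (1 - β) := by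
        rw [le_div_iff₀ h1β]
        have h2 : 1 - β ≤ Real.exp (-β) := by have := Real.add_one_le_exp (-β); linarith
        calc Real.exp β * (1 - β) ≤ Real.exp β * Real.exp (-β) :=
              mul_le_mul_of_nonneg_left h2 (Real.exp_nonneg _)
          _ = 1 := by rw [← Real.exp_add]; simp
      calc r₀ * Real.exp β ≤ r₀ * (1 / (1-β)) :=
            mul_le_mul_of_nonneg_left hexpb hr₀
        _ ≤ r₀ + β := by
            rw [mul_one_div, div_le_iff₀ h1β]
            nlinarith
    -- step 3 : r₀ ≤ (r₀+β) exp (-β) : from s2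
    have s3 : r₀ ≤ (r₀ + β) * Real.exp (-β) := by
      have hepos : (0:ℝ) < Real.exp β := Real.exp_pos β
      rw [Real.exp_neg, ← div_eq_mul_inv, le_div_iff₀ hepos]
      exact s2
    -- step 4 : r₁ ≤ exp (-r₀)... use exp(-(r₀)) ≥ 1 - r₀ = r₁
    have s4 : r₁ ≤ Real.exp (-r₀) := by
      have := Real.add_one_le_exp (-r₀); linarith
    -- combine : β (r₀+β) e^{-(r₀+β)} = β * ((r₀+β) e^{-β}) * e^{-r₀} ≥ β r₀ r₁ ≥ RHS
    have hcomb : r₀ * r₁ * β ≤ β * (r₀ + β) * Real.exp (-(r₀ + β)) := by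
      have : Real.exp (-(r₀+β)) = Real.exp (-β) * Real.exp (-r₀) := by
        rw [← Real.exp_add]; ring_nf
      rw [this]
      have e1 : r₀ * r₁ ≤ ((r₀+β) * Real.exp (-β)) * Real.exp (-r₀) := by
        have h₁ : 0 ≤ (r₀+β) * Real.exp (-β) := by positivity
        calc r₀ * r₁ ≤ ((r₀+β) * Real.exp (-β)) * r₁ :=
              mul_le_mul_of_nonneg_right s3 hr₁
          _ ≤ ((r₀+β) * Real.exp (-β)) * Real.exp (-r₀) :=
              mul_le_mul_of_nonneg_left s4 h₁
      calc r₀ * r₁ * β = β * (r₀ * r₁) := by ring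
        _ ≤ β * (((r₀+β) * Real.exp (-β)) * Real.exp (-r₀)) :=
            mul_le_mul_of_nonneg_left e1 hβ₀
        _ = β * (r₀+β) * (Real.exp (-β) * Real.exp (-r₀)) := by ring
    have : r₀ * r₁ * (1 - Real.exp (-β)) ≤ r₀ * r₁ * β :=
      mul_le_mul_of_nonneg_left s1 (by positivity)
    linarith


lemma improveProb_eq_ExEx {n : ℕ} (x : Fin n → Bool) (p₀ p₁ : ℝ)
    (h00 : 0 ≤ p₀) (h01 : p₀ ≤ 1) (h10 : 0 ≤ p₁) (h11 : p₁ ≤ 1) :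
    improveProb x p₀ p₁
      = Ex (ones x) p₁ (fun b => Ex (zeros x) p₀ (fun a => if b < a then 1 else 0)) := by
  rw [improveProb_eq x p₀ p₁ h00 h01 h10 h11, sum_eq_ExEx]

end Split

end AsymProof

open AsymProof

theorem stmt0 {n : ℕ} (hn : 1 ≤ n) (x : Fin n → Bool)
    (hz : 1 ≤ zeros x) (ho : 1 ≤ ones x)
    (r₀ r₁ β : ℝ) (hr₀ : 0 ≤ r₀) (hr₁ : 0 ≤ r₁) (hsum : r₀ + r₁ = 1)
    (hβ₀ : 0 ≤ β) (hβ : β ≤ r₁) :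
    improveProb x (r₀ / zeros x) (r₁ / ones x) + r₁ * r₀ * (1 - Real.exp (-β))
      ≤ improveProb x ((r₀ + β) / zeros x) ((r₁ - β) / ones x) := by
  classical
  have hzr : (1:ℝ) ≤ (zeros x : ℝ) := by exact_mod_cast hz
  have hor : (1:ℝ) ≤ (ones x : ℝ) := by exact_mod_cast ho
  have hzpos : (0:ℝ) < (zeros x : ℝ) := by linarith
  have hopos : (0:ℝ) < (ones x : ℝ) := by linarith
  have hr₁1 : r₁ ≤ 1 := by linarith
  have hsum1 : r₀ + β ≤ 1 := by linarith
  set p₀ : ℝ := r₀ / (zeros x : ℝ) with hp₀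
  set p₀' : ℝ := (r₀ + β) / (zeros x : ℝ) with hp₀'
  set p₁ : ℝ := r₁ / (ones x : ℝ) with hp₁
  set p₁' : ℝ := (r₁ - β) / (ones x : ℝ) with hp₁'
  have hp₀0 : 0 ≤ p₀ := div_nonneg hr₀ hzpos.le
  have hp₀'0 : 0 ≤ p₀' := div_nonneg (by linarith) hzpos.le
  have hp₀'1 : p₀' ≤ 1 := by rw [hp₀', div_le_one hzpos]; linarith
  have hp₀p₀' : p₀ ≤ p₀' := by
    rw [hp₀, hp₀']
    exact (div_le_div_iff_of_pos_right hzpos).2 (by linarith)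
  have hp₀1 : p₀ ≤ 1 := le_trans hp₀p₀' hp₀'1
  have hp₁'0 : 0 ≤ p₁' := div_nonneg (by linarith) hopos.le
  have hp₁1 : p₁ ≤ 1 := by rw [hp₁, div_le_one hopos]; linarith
  have hp₁'p₁ : p₁' ≤ p₁ := by
    rw [hp₁, hp₁']
    exact (div_le_div_iff_of_pos_right hopos).2 (by linarith)
  have hp₁'1 : p₁' ≤ 1 := le_trans hp₁'p₁ hp₁1
  rw [improveProb_eq_ExEx x p₀ p₁ hp₀0 hp₀1 (div_nonneg hr₁ hopos.le) hp₁1,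
      improveProb_eq_ExEx x p₀' p₁' hp₀'0 hp₀'1 hp₁'0 hp₁'1]
  set Φ : ℕ → ℝ := fun b => Ex (zeros x) p₀ (fun a => if b < a then 1 else 0) with hΦ
  set Φ' : ℕ → ℝ := fun b => Ex (zeros x) p₀' (fun a => if b < a then 1 else 0) with hΦ'
  have hind_mono : ∀ b : ℕ, Monotone (fun a : ℕ => if b < a then (1:ℝ) else 0) := by
    intro b a a' haa'
    dsimp only
    by_cases h1 : b < a
    · rw [if_pos h1, if_pos (lt_of_lt_of_le h1 haa')]
    · rw [if_neg h1]; split <;> norm_num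
  have hΦ'ge : ∀ b, Φ b ≤ Φ' b := fun b =>
    Ex_mono_p hp₀0 hp₀p₀' hp₀'1 (hind_mono b) _
  have hΦanti : Antitone Φ := by
    intro b b' hbb'
    apply Ex_mono_phi hp₀0 hp₀1
    intro k
    by_cases h1 : b' < k
    · rw [if_pos h1, if_pos (lt_of_le_of_lt hbb' h1)]
    · rw [if_neg h1]; split <;> norm_num
  have step1 : Ex (ones x) p₁ Φ ≤ Ex (ones x) p₁' Φ :=
    Ex_anti_p hp₁'0 hp₁'p₁ hp₁1 hΦanti _
  have step2 : (1 - p₁') ^ (ones x) * (Φ' 0 - Φ 0)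
      ≤ Ex (ones x) p₁' Φ' - Ex (ones x) p₁' Φ := by
    have h := Ex_single_le (m := ones x) hp₁'0 hp₁'1 (φ := fun k => Φ' k - Φ k)
      (fun k => by linarith [hΦ'ge k])
    rwa [Ex_sub] at h
  have hΦ0 : Φ 0 = 1 - (1 - p₀) ^ (zeros x) := by
    simp only [hΦ]; exact Ex_tail_zero _ _
  have hΦ'0 : Φ' 0 = 1 - (1 - p₀') ^ (zeros x) := by
    simp only [hΦ']; exact Ex_tail_zero _ _
  have hgap : r₁ * r₀ * (1 - Real.exp (-β)) ≤ (1 - p₁') ^ (ones x) * (Φ' 0 - Φ 0) := by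
    rw [hΦ0, hΦ'0]
    have hq : 0 ≤ 1 - p₀' := by linarith
    have hA1 : (zeros x : ℝ) * ((1-p₀) - (1-p₀')) * (1-p₀') ^ (zeros x - 1)
        ≤ (1-p₀) ^ (zeros x) - (1-p₀') ^ (zeros x) :=
      pow_sub_pow_ge hq (by linarith) _
    have hβeq : (zeros x : ℝ) * ((1-p₀) - (1-p₀')) = β := by
      rw [hp₀, hp₀']
      field_simp
      ring
    have hA2 : Real.exp (-(r₀+β)) ≤ (1-p₀') ^ (zeros x - 1) := by
      have h := pow_ge_exp hz (c := r₀+β) (by linarith) hsum1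
      rw [hp₀']
      exact h
    have hA3 : r₀ + β ≤ (1-p₁') ^ (ones x) := by
      have h := pow_ge_linear ho (t := r₁ - β) (by linarith) (by linarith)
      rw [hp₁']
      have e : 1 - (r₁ - β) = r₀ + β := by linarith
      rw [e] at h
      exact h
    have hA4 := key_exp_ineq hr₀ hr₁ hsum hβ₀ hβ
    have hexpnn : (0:ℝ) ≤ Real.exp (-(r₀+β)) := (Real.exp_pos _).le
    have c1 : β * Real.exp (-(r₀+β)) ≤ (1-p₀) ^ (zeros x) - (1-p₀') ^ (zeros x) := by
      calc β * Real.exp (-(r₀+β))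
          = ((zeros x : ℝ) * ((1-p₀)-(1-p₀'))) * Real.exp (-(r₀+β)) := by rw [hβeq]
        _ ≤ ((zeros x : ℝ) * ((1-p₀)-(1-p₀'))) * ((1-p₀') ^ (zeros x - 1)) := by
            apply mul_le_mul_of_nonneg_left hA2
            rw [hβeq]; exact hβ₀
        _ ≤ _ := hA1
    have hpow_nonneg : (0:ℝ) ≤ (1-p₁') ^ (ones x) := pow_nonneg (by linarith) _
    have hβexp_nonneg : (0:ℝ) ≤ β * Real.exp (-(r₀+β)) := mul_nonneg hβ₀ hexpnn
    calc r₁ * r₀ * (1 - Real.exp (-β)) = r₀ * r₁ * (1 - Real.exp (-β)) := by ring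
      _ ≤ β * (r₀ + β) * Real.exp (-(r₀+β)) := hA4
      _ = (r₀ + β) * (β * Real.exp (-(r₀+β))) := by ring
      _ ≤ (1-p₁') ^ (ones x) * (β * Real.exp (-(r₀+β))) :=
          mul_le_mul_of_nonneg_right hA3 hβexp_nonneg
      _ ≤ (1-p₁') ^ (ones x) * ((1-p₀) ^ (zeros x) - (1-p₀') ^ (zeros x)) :=
          mul_le_mul_of_nonneg_left c1 hpow_nonneg
      _ = (1-p₁') ^ (ones x) * (1 - (1 - p₀') ^ (zeros x) - (1 - (1 - p₀) ^ (zeros x))) := by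
          ring
  linarith [step1, step2, hgap]
end

section
/- Let n ≥ 1 and let x ∈ {0,1}^n be a fixed search point with z := |x|₀ ≥ 1 zero-bits and o := |x|₁ ≥ 1 one-bits. Let p₀ ∈ [0,1] and let 0 ≤ p₁' ≤ p₁ ≤ 1. Then for the fitness function OneMax, P[S_{(p₀,p₁')}] ≥ P[S_{(p₀,p₁)}]; i.e., decreasing the flip probability of one-bits while keeping the flip probability of zero-bits fixed does not decrease the probability of a strict improvement. -/
open MeasureTheory

instance bern_finite (p : ℝ) : IsFiniteMeasure (bern p) := by
  constructor
  rw [bern]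
  simp only [Measure.coe_add, Measure.coe_smul, Pi.add_apply, Pi.smul_apply, smul_eq_mul]
  exact ENNReal.add_lt_top.2 ⟨ENNReal.mul_lt_top ENNReal.ofReal_lt_top (by simp),
    ENNReal.mul_lt_top ENNReal.ofReal_lt_top (by simp)⟩

lemma bern_apply (p : ℝ) (b : Bool) : bern p {b} = ENNReal.ofReal (if b then p else 1 - p) := by
  cases b <;> simp [bern]

lemma measure_apply_fin {α : Type*} [Fintype α] [MeasurableSpace α] [MeasurableSingletonClass α]
    (μ : Measure α) (A : Set α) [DecidablePred (· ∈ A)] :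
    μ A = ∑ a : α, if a ∈ A then μ {a} else 0 := by
  have h : A = ⋃ a ∈ Finset.univ.filter (· ∈ A), ({a} : Set α) := by
    ext b; simp
  have h2 : μ A = μ (⋃ a ∈ Finset.univ.filter (· ∈ A), ({a} : Set α)) := congrArg μ h
  rw [h2, measure_biUnion_finset]
  · rw [Finset.sum_filter]
  · intro a _ b _ hab
    simp only [Function.onFun, Set.disjoint_singleton]
    exact hab
  · exact fun a _ => measurableSet_singleton a

noncomputable def pweight {n : ℕ} (q : Fin n → ℝ) (f : Fin n → Bool) : ℝ :=
  ∏ i, if f i then q i else 1 - q i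

noncomputable def Psum {n : ℕ} (x : Fin n → Bool) (q : Fin n → ℝ) : ℝ :=
  ∑ f : Fin n → Bool,
    if ones x < ones (fun i => xor (f i) (x i)) then pweight q f else 0

lemma improveProb_eq {n : ℕ} (x : Fin n → Bool) (p₀ p₁ : ℝ)
    (h0 : ∀ i, 0 ≤ (if x i then p₁ else p₀)) (h1 : ∀ i, (if x i then p₁ else p₀) ≤ 1) :
    improveProb x p₀ p₁ = Psum x (fun i => if x i then p₁ else p₀) := by
  classical
  set q : Fin n → ℝ := fun i => if x i then p₁ else p₀ with hq
  have hT : Measurable fun (flip : Fin n → Bool) i => xor (flip i) (x i) := by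
    apply measurable_pi_lambda
    intro i
    exact (measurable_of_countable (fun b => xor b (x i))).comp (measurable_pi_apply i)
  have hS : MeasurableSet {y : Fin n → Bool | ones x < ones y} :=
    (Set.toFinite _).measurableSet
  rw [improveProb, mutation, Measure.map_apply hT hS,
    measure_apply_fin]
  have hsing : ∀ f : Fin n → Bool,
      (Measure.pi fun i => bern (q i)) {f} = ENNReal.ofReal (pweight q f) := by
    intro f
    rw [← Set.univ_pi_singleton f, Measure.pi_pi]
    have hb : ∀ i ∈ Finset.univ, (bern (q i)) {f i}
        = ENNReal.ofReal (if f i then q i else 1 - q i) := by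
      intro i _; rw [bern_apply]
    rw [Finset.prod_congr rfl hb, ← ENNReal.ofReal_prod_of_nonneg, pweight]
    intro i _
    cases h : f i
    · simpa using h1 i
    · simpa using h0 i
  have : ∀ f : Fin n → Bool,
      ((if f ∈ (fun flip i => xor (flip i) (x i)) ⁻¹' {y : Fin n → Bool | ones x < ones y}
        then (Measure.pi fun i => bern (q i)) {f} else 0)).toReal
      = (if ones x < ones (fun i => xor (f i) (x i)) then pweight q f else 0) := by
    intro f
    simp only [Set.mem_preimage, Set.mem_setOf_eq]
    by_cases h : ones x < ones (fun i => xor (f i) (x i))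
    · rw [if_pos h, if_pos h, hsing f, ENNReal.toReal_ofReal]
      exact Finset.prod_nonneg fun i _ => by
        cases hfi : f i
        · simpa using h1 i
        · simpa using h0 i
    · rw [if_neg h, if_neg h]; rfl
  rw [ENNReal.toReal_sum, Psum]
  · exact Finset.sum_congr rfl fun f _ => this f
  · intro f _
    split
    · rw [hsing]; exact ENNReal.ofReal_ne_top
    · exact ENNReal.zero_ne_top

lemma ones_mono {n : ℕ} {g h : Fin n → Bool} (hgh : ∀ i, g i = true → h i = true) :
    ones g ≤ ones h := by
  apply Finset.card_le_card
  intro i hi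
  simp only [Finset.mem_filter, Finset.mem_univ, true_and] at *
  exact hgh i hi

/-- splitting a sum over all boolean vectors according to the value at `j` -/
lemma sum_split {n : ℕ} (j : Fin n) (F : (Fin n → Bool) → ℝ) :
    ∑ f : Fin n → Bool, F f
      = ∑ f ∈ Finset.univ.filter (fun f : Fin n → Bool => f j = false),
          (F f + F (Function.update f j true)) := by
  classical
  rw [Finset.sum_add_distrib]
  rw [← Finset.sum_filter_add_sum_filter_not Finset.univ (fun f : Fin n → Bool => f j = false) F]
  congr 1
  apply Finset.sum_nbij' (i := fun f => Function.update f j false)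
    (j := fun f => Function.update f j true)
  · intro a ha; simp
  · intro a ha
    simp only [Finset.mem_filter, Finset.mem_univ, true_and] at *
    simp [ha]
  · intro a ha
    simp only [Finset.mem_filter, Finset.mem_univ, true_and] at ha
    have : a j = true := by simpa using ha
    funext i
    by_cases hi : i = j
    · subst hi; simp [this]
    · simp [Function.update_of_ne hi]
  · intro a ha
    simp only [Finset.mem_filter, Finset.mem_univ, true_and] at ha
    funext i
    by_cases hi : i = j
    · subst hi; simp [ha]
    · simp [Function.update_of_ne hi]
  · intro a ha
    simp only [Finset.mem_filter, Finset.mem_univ, true_and] at ha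
    have h2 : a j = true := by simpa using ha
    congr 1
    funext i
    by_cases hi : i = j
    · subst hi; simp [h2]
    · simp [Function.update_of_ne hi]

lemma pweight_split {n : ℕ} (q : Fin n → ℝ) (f : Fin n → Bool) (j : Fin n) :
    pweight q f = (if f j then q j else 1 - q j) *
      ∏ i ∈ Finset.univ.erase j, (if f i then q i else 1 - q i) := by
  rw [pweight, ← Finset.mul_prod_erase Finset.univ _ (Finset.mem_univ j)]

lemma local_step {n : ℕ} (x : Fin n → Bool) (q : Fin n → ℝ)
    (hq0 : ∀ i, 0 ≤ q i) (hq1 : ∀ i, q i ≤ 1)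
    (j : Fin n) (hxj : x j = true) (t : ℝ) (ht0 : 0 ≤ t) (ht : t ≤ q j) :
    Psum x q ≤ Psum x (Function.update q j t) := by
  classical
  rw [Psum, Psum, sum_split j, sum_split j]
  apply Finset.sum_le_sum
  intro f hf
  simp only [Finset.mem_filter, Finset.mem_univ, true_and] at hf
  set f' := Function.update f j true with hf'
  set W := ∏ i ∈ Finset.univ.erase j, (if f i then q i else 1 - q i) with hW
  have hW0 : 0 ≤ W := by
    apply Finset.prod_nonneg
    intro i _
    by_cases h : f i
    · simp [h]; exact hq0 i
    · simp [h]; linarith [hq1 i]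
  have hWf' : ∀ r : Fin n → ℝ, ∏ i ∈ Finset.univ.erase j, (if f' i then r i else 1 - r i)
      = ∏ i ∈ Finset.univ.erase j, (if f i then r i else 1 - r i) := by
    intro r
    refine Finset.prod_congr rfl fun i hi => ?_
    have hij : i ≠ j := (Finset.mem_erase.1 hi).1
    rw [hf', Function.update_of_ne hij]
  have hWt : ∀ g : Fin n → Bool, ∏ i ∈ Finset.univ.erase j,
        (if g i then Function.update q j t i else 1 - Function.update q j t i)
      = ∏ i ∈ Finset.univ.erase j, (if g i then q i else 1 - q i) := by
    intro g
    refine Finset.prod_congr rfl fun i hi => ?_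
    have hij : i ≠ j := (Finset.mem_erase.1 hi).1
    rw [Function.update_of_ne hij]
  have e1 : pweight q f = (1 - q j) * W := by rw [pweight_split q f j, hf]; simp [hW]
  have e2 : pweight q f' = q j * W := by
    rw [pweight_split q f' j, hWf' q, hf', Function.update_self]; simp [hW]
  have e3 : pweight (Function.update q j t) f = (1 - t) * W := by
    rw [pweight_split _ f j, hWt f, hf, Function.update_self]; simp [hW]
  have e4 : pweight (Function.update q j t) f' = t * W := by
    rw [pweight_split _ f' j, hWt f', hWf' q, hf', Function.update_self,
      Function.update_self]; simp [hW]
  have hc : (ones x < ones fun i => xor (f' i) (x i)) → (ones x < ones fun i => xor (f i) (x i)) := by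
    intro h
    refine lt_of_lt_of_le h (ones_mono fun i hi => ?_)
    by_cases hij : i = j
    · exfalso
      subst hij
      rw [hf', Function.update_self, hxj] at hi
      simp at hi
    · rwa [hf', Function.update_of_ne hij] at hi
  rw [e1, e2, e3, e4]
  by_cases hc1 : (ones x < ones fun i => xor (f' i) (x i))
  · have hc0 := hc hc1
    rw [if_pos hc0, if_pos hc1, if_pos hc0, if_pos hc1]
    ring_nf
    linarith
  · by_cases hc0 : (ones x < ones fun i => xor (f i) (x i))
    · rw [if_pos hc0, if_neg hc1, if_pos hc0, if_neg hc1]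
      have : (1 - q j) * W ≤ (1 - t) * W := mul_le_mul_of_nonneg_right (by linarith) hW0
      linarith
    · rw [if_neg hc0, if_neg hc1, if_neg hc0, if_neg hc1]

lemma chain {n : ℕ} (x : Fin n → Bool) (q q' : Fin n → ℝ)
    (h0' : ∀ i, 0 ≤ q' i) (hle : ∀ i, q' i ≤ q i) (h1 : ∀ i, q i ≤ 1)
    (hfix : ∀ i, x i = false → q' i = q i) (T : Finset (Fin n)) :
    Psum x q ≤ Psum x (fun i => if i ∈ T then q' i else q i) := by
  classical
  induction T using Finset.induction_on with
  | empty => simp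
  | @insert j T hj IH =>
    set qT : Fin n → ℝ := fun i => if i ∈ T then q' i else q i with hqT
    have heq : (fun i => if i ∈ insert j T then q' i else q i)
        = Function.update qT j (q' j) := by
      funext i
      by_cases hij : i = j
      · subst hij; simp [Function.update_self]
      · rw [Function.update_of_ne hij, hqT]
        simp [Finset.mem_insert, hij]
    have hqTj : qT j = q j := by simp [hqT, hj]
    have hqT0 : ∀ i, 0 ≤ qT i := by
      intro i; rw [hqT]
      by_cases h : i ∈ T
      · simp [h]; exact h0' i
      · simp [h]; exact le_trans (h0' i) (hle i)
    have hqT1 : ∀ i, qT i ≤ 1 := by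
      intro i; rw [hqT]
      by_cases h : i ∈ T
      · simp [h]; exact le_trans (hle i) (h1 i)
      · simp [h]; exact h1 i
    rw [heq]
    by_cases hx : x j = true
    · refine le_trans IH ?_
      exact local_step x qT hqT0 hqT1 j hx (q' j) (h0' j) (by rw [hqTj]; exact hle j)
    · have hx' : x j = false := by simpa using hx
      have : Function.update qT j (q' j) = qT := by
        have : q' j = qT j := by rw [hqTj]; exact hfix j hx'
        rw [this, Function.update_eq_self]
      rw [this]
      exact IH
theorem stmt1 {n : ℕ} (hn : 1 ≤ n) (x : Fin n → Bool)
    (hz : 1 ≤ zeros x) (ho : 1 ≤ ones x)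
    (p₀ p₁ p₁' : ℝ) (hp₀0 : 0 ≤ p₀) (hp₀1 : p₀ ≤ 1)
    (hp₁'0 : 0 ≤ p₁') (hle : p₁' ≤ p₁) (hp₁1 : p₁ ≤ 1) :
    improveProb x p₀ p₁ ≤ improveProb x p₀ p₁' := by
  have hp₁0 : 0 ≤ p₁ := le_trans hp₁'0 hle
  have hp₁'1 : p₁' ≤ 1 := le_trans hle hp₁1
  rw [improveProb_eq x p₀ p₁
      (fun i => by by_cases h : x i = true <;> simp [h] <;> assumption)
      (fun i => by by_cases h : x i = true <;> simp [h] <;> assumption),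
    improveProb_eq x p₀ p₁'
      (fun i => by by_cases h : x i = true <;> simp [h] <;> assumption)
      (fun i => by by_cases h : x i = true <;> simp [h] <;> assumption)]
  have h := chain x (fun i => if x i then p₁ else p₀) (fun i => if x i then p₁' else p₀)
    (fun i => by by_cases h : x i = true <;> simp [h] <;> assumption)
    (fun i => by by_cases h : x i = true <;> simp [h]; exact hle)
    (fun i => by by_cases h : x i = true <;> simp [h] <;> assumption)
    (fun i hi => by simp [hi]) Finset.univ
  have heq : (fun i => if i ∈ (Finset.univ : Finset (Fin n)) then
      (fun i => if x i then p₁' else p₀) i else (fun i => if x i then p₁ else p₀) i)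
      = fun i => if x i then p₁' else p₀ := by
    funext i; simp
  rwa [heq] at h
end

section
/- Let n ≥ 2, let α ∈ (0,1/2), and let x ∈ {0,1}^n be a fixed search point with z := |x|₀ ≥ 1 zero-bits and o := |x|₁ ≥ 1 one-bits. Let y be created from x by asymmetric mutation with pair ((1−2α)/z, 2α/o). Then the expected elitist fitness gain on OneMax satisfies E[max{OneMax(y) − OneMax(x), 0}] ≥ (1−2α)·(1 − 2α/o)^o ≥ (1−2α)² ≥ 1 − 4α. -/
open MeasureTheory

lemma bern_true (p : ℝ) : bern p {true} = ENNReal.ofReal p := by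
  simp [bern, Measure.dirac_apply']

lemma bern_false (p : ℝ) : bern p {false} = ENNReal.ofReal (1 - p) := by
  simp [bern, Measure.dirac_apply']

lemma bern_isProb {p : ℝ} (h0 : 0 ≤ p) (h1 : p ≤ 1) : IsProbabilityMeasure (bern p) := by
  constructor
  simp [bern]
  rw [← ENNReal.ofReal_add h0 (by linarith)]
  norm_num

lemma integral_bern {p : ℝ} (h0 : 0 ≤ p) (h1 : p ≤ 1) (f : Bool → ℝ) :
    ∫ b, f b ∂bern p = p * f true + (1 - p) * f false := by
  haveI := bern_isProb h0 h1
  rw [integral_fintype (Integrable.of_finite)]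
  simp [Measure.real, Fintype.sum_bool, bern_true, bern_false, ENNReal.toReal_ofReal, h0,
    ENNReal.toReal_ofReal (by linarith : (0:ℝ) ≤ 1 - p)]

lemma integral_pi_prod {m : ℕ} (μ : Fin m → Measure Bool) [∀ i, IsProbabilityMeasure (μ i)]
    (f : Fin m → Bool → ℝ) :
    ∫ y, ∏ i, f i (y i) ∂Measure.pi μ = ∏ i, ∫ b, f i b ∂μ i := by
  rw [integral_fintype (Integrable.of_finite)]
  simp only [Measure.real]
  have h1 : ∀ i, ∫ b, f i b ∂μ i = ∑ b, (μ i {b}).toReal * f i b := by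
    intro i
    rw [integral_fintype (Integrable.of_finite)]
    simp [Measure.real, smul_eq_mul]
  simp_rw [h1]
  rw [Fintype.prod_sum (fun i b => (μ i {b}).toReal * f i b)]
  refine Finset.sum_congr rfl fun y _ => ?_
  rw [Finset.prod_mul_distrib, smul_eq_mul]
  congr 1
  rw [← Set.univ_pi_singleton y, Measure.pi_pi, ENNReal.toReal_prod]

theorem stmt10 {n : ℕ} (hn : 2 ≤ n) (α : ℝ) (hα : α ∈ Set.Ioo (0 : ℝ) (1 / 2))
    (x : Fin n → Bool) (hz : 1 ≤ zeros x) (ho : 1 ≤ ones x) :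
    ((1 - 2 * α) * (1 - 2 * α / ones x) ^ (ones x)
        ≤ ∫ y, max ((ones y : ℝ) - (ones x : ℝ)) 0
            ∂(mutation x ((1 - 2 * α) / zeros x) (2 * α / ones x)))
    ∧ ((1 - 2 * α) ^ 2 ≤ (1 - 2 * α) * (1 - 2 * α / ones x) ^ (ones x))
    ∧ (1 - 4 * α ≤ (1 - 2 * α) ^ 2) := by
  obtain ⟨hα0, hα2⟩ := hα
  have h2α : 0 < 1 - 2 * α := by linarith
  have hoR : (1 : ℝ) ≤ (ones x : ℝ) := by exact_mod_cast ho
  have hzR : (1 : ℝ) ≤ (zeros x : ℝ) := by exact_mod_cast hz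
  have hoR' : (0 : ℝ) < (ones x : ℝ) := by linarith
  have hzR' : (0 : ℝ) < (zeros x : ℝ) := by linarith
  set p₀ : ℝ := (1 - 2 * α) / zeros x with hp₀def
  set p₁ : ℝ := 2 * α / ones x with hp₁def
  have hp₀0 : 0 ≤ p₀ := div_nonneg (by linarith) (by linarith)
  have hp₀1 : p₀ ≤ 1 := by
    rw [hp₀def, div_le_one hzR']; linarith
  have hp₁0 : 0 ≤ p₁ := div_nonneg (by linarith) (by linarith)
  have hp₁1 : p₁ ≤ 1 := by
    rw [hp₁def, div_le_one hoR']; nlinarith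
  have h1p₁ : 1 - p₁ = 1 - 2 * α / ones x := by rw [hp₁def]
  -- part 2
  have part2 : (1 - 2 * α) ^ 2 ≤ (1 - 2 * α) * (1 - 2 * α / ones x) ^ (ones x) := by
    have hber := one_add_mul_le_pow (a := -(2 * α / (ones x : ℝ)))
      (by nlinarith [div_le_one_of_le₀ (by nlinarith : 2 * α ≤ (ones x:ℝ)) (le_of_lt hoR')]) (ones x)
    have hkey : 1 - 2 * α ≤ (1 - 2 * α / ones x) ^ (ones x) := by
      have : 1 + (ones x : ℝ) * -(2 * α / ones x) = 1 - 2 * α := by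
        field_simp
        ring
      calc 1 - 2 * α = 1 + (ones x : ℝ) * -(2 * α / ones x) := this.symm
        _ ≤ (1 + -(2 * α / ones x)) ^ (ones x) := hber
        _ = (1 - 2 * α / ones x) ^ (ones x) := by ring_nf
    calc (1 - 2 * α) ^ 2 = (1 - 2 * α) * (1 - 2 * α) := sq (1 - 2*α) ▸ rfl
      _ ≤ (1 - 2 * α) * (1 - 2 * α / ones x) ^ (ones x) :=
        mul_le_mul_of_nonneg_left hkey (le_of_lt h2α)
  refine ⟨?_, part2, by nlinarith [sq_nonneg α]⟩
  -- main part
  haveI hprob : ∀ i, IsProbabilityMeasure (bern (if x i then p₁ else p₀)) := fun i => by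
    by_cases h : x i <;> simp [h] <;> exact bern_isProb (by assumption) (by assumption)
  set μ := Measure.pi fun i => bern (if x i then p₁ else p₀) with hμ
  set T : (Fin n → Bool) → (Fin n → Bool) := fun flip i => xor (flip i) (x i) with hT
  have hmap : ∫ y, max ((ones y : ℝ) - (ones x : ℝ)) 0 ∂(mutation x p₀ p₁)
      = ∫ flip, max ((ones (T flip) : ℝ) - (ones x : ℝ)) 0 ∂μ := by
    rw [mutation]
    exact integral_map (Measurable.of_discrete.aemeasurable)
      (Measurable.of_discrete.aestronglyMeasurable)
  rw [hmap]
  set Z : Finset (Fin n) := Finset.univ.filter (fun i => x i = false) with hZ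
  set O : Finset (Fin n) := Finset.univ.filter (fun i => x i = true) with hO
  have hOcard : O.card = ones x := rfl
  have hZcard : Z.card = zeros x := rfl
  set h : Fin n → Fin n → Bool → ℝ := fun i j b =>
    if j = i then (if b then 1 else 0) else if x j then (if b then 0 else 1) else 1 with hh
  set g : (Fin n → Bool) → ℝ := fun flip => ∑ i ∈ Z, ∏ j, h i j (flip j) with hg
  -- pointwise bound
  have hpt : ∀ flip, g flip ≤ max ((ones (T flip) : ℝ) - (ones x : ℝ)) 0 := by
    intro flip
    by_cases hB : ∀ j, x j = true → flip j = false
    · have hterm : ∀ i ∈ Z, ∏ j, h i j (flip j) = if flip i then (1:ℝ) else 0 := by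
        intro i hi
        have hxi : x i = false := by simpa [hZ] using hi
        rw [← Finset.mul_prod_erase Finset.univ _ (Finset.mem_univ i)]
        have he : ∏ j ∈ Finset.univ.erase i, h i j (flip j) = 1 := by
          refine Finset.prod_eq_one fun j hj => ?_
          have hji : j ≠ i := Finset.ne_of_mem_erase hj
          by_cases hxj : x j = true
          · simp [hh, hji, hxj, hB j hxj]
          · simp [hh, hji, hxj]
        rw [he, mul_one]
        simp [hh]
      rw [hg]
      simp only []
      rw [Finset.sum_congr rfl hterm, Finset.sum_boole]
      have hones : ones (T flip) = ones x + (Z.filter (fun i => flip i = true)).card := by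
        rw [ones, ← hOcard]
        rw [← Finset.card_union_of_disjoint]
        · congr 1
          ext j
          by_cases hxj : x j = true
          · simp [hT, hxj, hB j hxj, hO, hZ]
          · have hxj' : x j = false := by simpa using hxj
            simp [hT, hxj', hO, hZ]
        · rw [Finset.disjoint_left]
          intro a ha ha'
          simp [hO] at ha
          simp [hZ] at ha'
          rw [ha] at ha'; exact Bool.noConfusion ha'.1
      rw [hones]
      push_cast
      have hc : (0:ℝ) ≤ ((Z.filter (fun i => flip i = true)).card : ℝ) := Nat.cast_nonneg _
      rw [max_eq_left (by linarith)]
      linarith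
    · push_neg at hB
      obtain ⟨j₀, hxj₀, hfj₀⟩ := hB
      have hfj₀' : flip j₀ = true := by simpa using hfj₀
      have hg0 : g flip = 0 := by
        rw [hg]
        refine Finset.sum_eq_zero fun i hi => ?_
        have hxi : x i = false := by simpa [hZ] using hi
        refine Finset.prod_eq_zero (Finset.mem_univ j₀) ?_
        have : j₀ ≠ i := fun e => by rw [e, hxi] at hxj₀; exact Bool.noConfusion hxj₀
        simp [hh, this, hxj₀, hfj₀']
      rw [hg0]
      exact le_max_right _ _
  -- integral of g
  have hIg : ∫ flip, g flip ∂μ = (1 - 2 * α) * (1 - p₁) ^ (ones x) := by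
    rw [hg, hμ]
    rw [integral_finset_sum _ (fun i _ => Integrable.of_finite)]
    have hterm : ∀ i ∈ Z, (∫ flip, ∏ j, h i j (flip j)
        ∂Measure.pi fun i => bern (if x i then p₁ else p₀)) = p₀ * (1 - p₁) ^ (ones x) := by
      intro i hi
      have hxi : x i = false := by simpa [hZ] using hi
      rw [integral_pi_prod]
      have hfac : ∀ j, (∫ b, h i j b ∂bern (if x j then p₁ else p₀))
          = if j = i then p₀ else if x j then 1 - p₁ else 1 := by
        intro j
        by_cases hji : j = i
        · subst hji
          rw [hxi]
          simp only [Bool.false_eq_true, if_false]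
          rw [integral_bern hp₀0 hp₀1]
          simp [hh]
        · by_cases hxj : x j = true
          · rw [hxj]
            simp only [if_true]
            rw [integral_bern hp₁0 hp₁1]
            simp [hh, hji, hxj]
          · have hxj' : x j = false := by simpa using hxj
            rw [hxj']
            simp only [Bool.false_eq_true, if_false]
            rw [integral_bern hp₀0 hp₀1]
            simp [hh, hji, hxj']
      rw [Finset.prod_congr rfl (fun j _ => hfac j)]
      rw [← Finset.mul_prod_erase Finset.univ _ (Finset.mem_univ i)]
      rw [if_pos rfl]
      congr 1
      have : ∀ j ∈ Finset.univ.erase i, (if j = i then p₀ else if x j then 1 - p₁ else 1)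
          = if x j then 1 - p₁ else 1 := fun j hj => if_neg (Finset.ne_of_mem_erase hj)
      rw [Finset.prod_congr rfl this, Finset.prod_ite, Finset.prod_const, Finset.prod_const,
        one_pow, mul_one]
      congr 1
      rw [← hOcard, hO, Finset.filter_erase, Finset.erase_eq_of_notMem]
      simp [hxi]
    rw [Finset.sum_congr rfl hterm, Finset.sum_const, hZcard, nsmul_eq_mul, hp₀def]
    field_simp
  rw [h1p₁] at hIg
  calc (1 - 2 * α) * (1 - 2 * α / ones x) ^ (ones x) = ∫ flip, g flip ∂μ := hIg.symm
    _ ≤ ∫ flip, max ((ones (T flip) : ℝ) - (ones x : ℝ)) 0 ∂μ :=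
      integral_mono (Integrable.of_finite) (Integrable.of_finite) hpt
end

section
/- Let n ≥ 1, let 1 ≤ z ≤ n, let a = 0^z 1^{n−z} ∈ {0,1}^n (z zeros followed by n−z ones), and let x ∈ {0,1}^n with h := H(x,a) ≥ 2z. Then the number of positions i > z with x_i = 0 (zero-bits of x whose flip strictly increases OneMax_a) is at least h − z ≥ h/2, and the total number of zero-bits of x satisfies |x|₀ ≤ h + z ≤ (3/2)·h. -/
/- For `a = 0^z 1^(n-z)` (positions `i < z` are `0`, positions `i ≥ z` are `1`) and `x`
with `h = H(x,a) ≥ 2z`: the number of zero-bits of `x` in the suffix (whose flip strictly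
increases `OneMax_a`) is at least `h - z ≥ h/2`, and `|x|₀ ≤ h + z ≤ (3/2)·h`. -/
theorem stmt16 (n : ℕ) (hn : 1 ≤ n) (z : ℕ) (hz1 : 1 ≤ z) (hzn : z ≤ n)
    (a : Fin n → Bool) (ha : ∀ i : Fin n, a i = decide (z ≤ (i : ℕ)))
    (x : Fin n → Bool) (h2z : 2 * z ≤ hammingDist x a) :
    ((hammingDist x a : ℝ) - z
        ≤ ((Finset.univ.filter fun i : Fin n => z ≤ (i : ℕ) ∧ x i = false).card : ℝ))
    ∧ ((hammingDist x a : ℝ) / 2 ≤ (hammingDist x a : ℝ) - z)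
    ∧ ((zeros x : ℝ) ≤ (hammingDist x a : ℝ) + z)
    ∧ ((hammingDist x a : ℝ) + z ≤ 3 / 2 * (hammingDist x a : ℝ)) := by
  set S : Finset (Fin n) := Finset.univ.filter (fun i => x i ≠ a i) with hS
  set T : Finset (Fin n) := Finset.univ.filter (fun i : Fin n => z ≤ (i : ℕ) ∧ x i = false) with hT
  set P : Finset (Fin n) := Finset.univ.filter (fun i : Fin n => (i : ℕ) < z) with hP
  have hdist : hammingDist x a = S.card := rfl
  have hPcard : P.card ≤ z := by
    have := Finset.card_le_card_of_injOn (s := P) (t := Finset.range z)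
      (fun i : Fin n => (i : ℕ))
      (fun i hi => by simp only [hP, Finset.mem_filter, Finset.mem_univ, true_and] at hi
                      simpa using hi)
      (fun i _ j _ h => Fin.val_injective h)
    simpa using this
  have hST : S ⊆ T ∪ P := by
    intro i hi
    simp only [hS, Finset.mem_filter, Finset.mem_univ, true_and] at hi
    rw [ha i] at hi
    by_cases hzi : z ≤ (i : ℕ)
    · refine Finset.mem_union_left _ ?_
      simp only [hT, Finset.mem_filter, Finset.mem_univ, true_and]
      refine ⟨hzi, ?_⟩
      simp [hzi] at hi
      simpa using hi
    · exact Finset.mem_union_right _ (by simp [hP, Nat.lt_of_not_le hzi])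
  have hTS : T ⊆ S := by
    intro i hi
    simp only [hT, Finset.mem_filter, Finset.mem_univ, true_and] at hi
    simp only [hS, Finset.mem_filter, Finset.mem_univ, true_and]
    rw [ha i, hi.2]
    simp [hi.1]
  have h1 : hammingDist x a ≤ T.card + z := by
    calc hammingDist x a = S.card := hdist
    _ ≤ (T ∪ P).card := Finset.card_le_card hST
    _ ≤ T.card + P.card := Finset.card_union_le _ _
    _ ≤ T.card + z := by omega
  have hTcard : T.card ≤ hammingDist x a := hdist ▸ Finset.card_le_card hTS
  have hZ : zeros x ≤ hammingDist x a + z := by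
    have hsub : (Finset.univ.filter fun i : Fin n => x i = false) ⊆ T ∪ P := by
      intro i hi
      simp only [Finset.mem_filter, Finset.mem_univ, true_and] at hi
      by_cases hzi : z ≤ (i : ℕ)
      · exact Finset.mem_union_left _ (by simp [hT, hzi, hi])
      · exact Finset.mem_union_right _ (by simp [hP, Nat.lt_of_not_le hzi])
    calc zeros x ≤ (T ∪ P).card := Finset.card_le_card hsub
    _ ≤ T.card + P.card := Finset.card_union_le _ _
    _ ≤ hammingDist x a + z := by omega
  refine ⟨?_, ?_, ?_, ?_⟩
  · have : (hammingDist x a : ℝ) ≤ T.card + z := by exact_mod_cast h1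
    linarith
  · have : (2 * z : ℝ) ≤ hammingDist x a := by exact_mod_cast h2z
    linarith
  · exact_mod_cast hZ
  · have : (2 * z : ℝ) ≤ hammingDist x a := by exact_mod_cast h2z
    linarith
end
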